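/- Suppose α* ∈ A satisfies h(α*) ≥ h(α) for all α ∈ A, suppose that for every α ∈ A the infimum h(α) is attained, suppose there is a relatively open neighborhood U of α* in A and a map x* : U → ℝ^d such that for each α ∈ U the point x*(α) minimizes f over {x ∈ ℝ^d : g(x, α) ≥ 0} and such that x* is differentiable at α* (within A), and suppose ∇ₓg(x*(α*), α*) ≠ 0. Then x*(α*) satisfies g(x*(α*), α) ≥ 0 for every α ∈ A, and f(x*(α*)) ≤ f(x) for every x ∈ ℝ^d satisfying g(x, α) ≥ 0 for all α ∈ A; that is, x*(α*) minimizes f subject to the semi-infinite family of constraints {g(·, α) ≥ 0 : α ∈ A}. -/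

import Mathlib

open Set Filter Topology

lemma aux_slope_nonneg {ψ : ℝ → ℝ} {m : ℝ}
    (hd : HasDerivWithinAt ψ m (Set.Icc 0 1) 0)
    (h2 : ∀ᶠ t in 𝓝[>] (0:ℝ), ψ 0 ≤ ψ t) : 0 ≤ m := by
  have hs : Set.Icc (0:ℝ) 1 \ {0} = Set.Ioc 0 1 := Set.Icc_diff_left
  have ht : Tendsto (slope ψ 0) (𝓝[>] (0:ℝ)) (𝓝 m) := by
    have := hasDerivWithinAt_iff_tendsto_slope.mp hd
    rwa [hs, nhdsWithin_Ioc_eq_nhdsGT one_pos] at this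
  refine ge_of_tendsto ht ?_
  filter_upwards [h2, self_mem_nhdsWithin] with t h1 (h3 : t ∈ Set.Ioi 0)
  rw [slope_def_field]
  have : (0:ℝ) < t := h3
  rw [div_nonneg_iff]
  exact Or.inl ⟨by linarith, by linarith⟩

lemma aux_slope_nonpos {ψ : ℝ → ℝ} {m : ℝ}
    (hd : HasDerivWithinAt ψ m (Set.Icc 0 1) 0)
    (h2 : ∀ᶠ t in 𝓝[>] (0:ℝ), ψ t ≤ ψ 0) : m ≤ 0 := by
  have := aux_slope_nonneg hd.neg (by filter_upwards [h2] with t ht; simpa using ht)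
  linarith

lemma aux_eventually_pos {θ : ℝ → ℝ} {m : ℝ} (hd : HasDerivAt θ m 0) (h0 : θ 0 = 0)
    (hm : 0 < m) : ∀ᶠ s in 𝓝[>] (0:ℝ), 0 < θ s := by
  have ht : Tendsto (slope θ 0) (𝓝[>] (0:ℝ)) (𝓝 m) := by
    have := hasDerivWithinAt_iff_tendsto_slope.mp (hd.hasDerivWithinAt (s := Set.Ioi 0))
    rwa [Set.diff_singleton_eq_self (by simp)] at this
  have hev : ∀ᶠ s in 𝓝[>] (0:ℝ), 0 < slope θ 0 s := ht.eventually (eventually_gt_nhds hm)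
  filter_upwards [hev, self_mem_nhdsWithin] with s hs (hs' : s ∈ Set.Ioi 0)
  rw [slope_def_field, h0, sub_zero, sub_zero] at hs
  have : (0:ℝ) < s := hs'
  calc (0:ℝ) = (θ s / s) * 0 := by ring
  _ < (θ s / s) * s := by apply mul_lt_mul_of_pos_left this hs
  _ = θ s := by field_simp

lemma aux_tangent {E : Type*} [NormedAddCommGroup E] [NormedSpace ℝ E]
    {s : Set E} {φ : E → ℝ} {φ' : E →L[ℝ] ℝ} {x y : E}
    (hφ : ConvexOn ℝ s φ) (hx : x ∈ s) (hy : y ∈ s)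
    (hd : HasFDerivAt φ φ' x) : φ' (y - x) ≤ φ y - φ x := by
  set ρ : ℝ → ℝ := fun t => φ (x + t • (y - x)) with hρdef
  have hcc : HasDerivAt (fun t : ℝ => x + t • (y - x)) (y - x) 0 := by
    simpa using ((hasDerivAt_id (0:ℝ)).smul_const (y - x)).const_add x
  have hρd : HasDerivWithinAt ρ (φ' (y - x)) (Set.Icc 0 1) 0 := by
    have h1 : HasFDerivAt φ φ' (x + (0:ℝ) • (y - x)) := by simpa using hd
    exact (h1.comp_hasDerivAt 0 hcc).hasDerivWithinAt
  have hρ0 : ρ 0 = φ x := by simp [hρdef]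
  have hs : Set.Icc (0:ℝ) 1 \ {0} = Set.Ioc 0 1 := Set.Icc_diff_left
  have ht : Tendsto (slope ρ 0) (𝓝[>] (0:ℝ)) (𝓝 (φ' (y - x))) := by
    have := hasDerivWithinAt_iff_tendsto_slope.mp hρd
    rwa [hs, nhdsWithin_Ioc_eq_nhdsGT one_pos] at this
  refine le_of_tendsto ht ?_
  filter_upwards [Ioc_mem_nhdsGT (one_pos)] with t ht'
  obtain ⟨ht0, ht1⟩ := ht'
  have hmem : x + t • (y - x) = (1 - t) • x + t • y := by
    rw [smul_sub, sub_smul, one_smul]; abel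
  have hb : ρ t ≤ (1 - t) * φ x + t * φ y := by
    rw [hρdef]; dsimp only
    rw [hmem]
    exact hφ.2 hx hy (by linarith) ht0.le (by ring)
  rw [slope_def_field, hρ0, sub_zero]
  rw [div_le_iff₀ ht0]
  nlinarith

theorem stmt_0
    (d : ℕ) (hd : 1 ≤ d)
    (A : Set ℝ) (hA : Convex ℝ A)
    (g : EuclideanSpace ℝ (Fin d) × ℝ → ℝ) (hg : ContDiff ℝ 1 g)
    (hgconv : ∀ x : EuclideanSpace ℝ (Fin d), ConvexOn ℝ A (fun α => g (x, α)))
    (f : EuclideanSpace ℝ (Fin d) → ℝ) (hf : ContDiff ℝ 1 f)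
    (hfconv : ConvexOn ℝ Set.univ f)
    (hfmin : ∃! x₀ : EuclideanSpace ℝ (Fin d), ∀ x, f x₀ ≤ f x)
    (h : ℝ → ℝ)
    (αstar : ℝ) (hαstarA : αstar ∈ A)
    (hmax : ∀ α ∈ A, h α ≤ h αstar)
    (hattain : ∀ α ∈ A, ∃ x : EuclideanSpace ℝ (Fin d),
      0 ≤ g (x, α) ∧ (∀ y, 0 ≤ g (y, α) → f x ≤ f y) ∧ f x = h α)
    (U : Set ℝ) (hUA : U ⊆ A) (hαstarU : αstar ∈ U)
    (hUopen : ∃ V : Set ℝ, IsOpen V ∧ U = V ∩ A)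
    (xstar : ℝ → EuclideanSpace ℝ (Fin d))
    (hxstar : ∀ α ∈ U, 0 ≤ g (xstar α, α) ∧ ∀ y, 0 ≤ g (y, α) → f (xstar α) ≤ f y)
    (hdiff : DifferentiableWithinAt ℝ xstar A αstar)
    (hgrad : fderiv ℝ (fun x => g (x, αstar)) (xstar αstar) ≠ 0) :
    (∀ α ∈ A, 0 ≤ g (xstar αstar, α)) ∧
      ∀ x : EuclideanSpace ℝ (Fin d), (∀ α ∈ A, 0 ≤ g (x, α)) → f (xstar αstar) ≤ f x := by
  obtain ⟨V, hVopen, hUV⟩ := hUopen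
  set x₀ := xstar αstar with hx₀def
  obtain ⟨hx₀feas, hx₀min⟩ := hxstar αstar hαstarU
  -- value at αstar
  have hval : h αstar = f x₀ := by
    obtain ⟨xa, ha1, ha2, ha3⟩ := hattain αstar hαstarA
    have h1 := hx₀min xa ha1
    have h2 := ha2 x₀ hx₀feas
    linarith
  refine ⟨?_, fun x hx => hx₀min x (hx αstar hαstarA)⟩
  have hfd : Differentiable ℝ f := hf.differentiable one_ne_zero
  have hgd : Differentiable ℝ g := hg.differentiable one_ne_zero
  set F := fderiv ℝ f x₀ with hFdef
  by_cases hF : F = 0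
  · -- gradient of f vanishes: x₀ is the global minimizer
    have hglob : ∀ y, f x₀ ≤ f y := by
      intro y
      have := aux_tangent hfconv (Set.mem_univ x₀) (Set.mem_univ y) (hfd x₀).hasFDerivAt
      rw [← hFdef, hF] at this
      simp only [ContinuousLinearMap.zero_apply] at this
      linarith
    intro α hα
    obtain ⟨xa, ha1, ha2, ha3⟩ := hattain α hα
    have h1 : f xa ≤ f x₀ := by
      rw [ha3, ← hval]; exact hmax α hα
    have h2 : f x₀ ≤ f xa := hglob xa
    have heq : f xa = f x₀ := le_antisymm h1 h2
    have hxa_glob : ∀ y, f xa ≤ f y := fun y => heq ▸ hglob y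
    obtain ⟨m, _, huniq⟩ := hfmin
    have e1 : xa = m := huniq xa hxa_glob
    have e2 : x₀ = m := huniq x₀ hglob
    rw [show x₀ = xa from e2.trans e1.symm]
    exact ha1
  · -- gradient of f nonzero
    set G := fderiv ℝ g (x₀, αstar) with hGdef
    have hGf : HasFDerivAt g G (x₀, αstar) := (hgd _).hasFDerivAt
    set Gx : EuclideanSpace ℝ (Fin d) →L[ℝ] ℝ := G.comp (ContinuousLinearMap.inl ℝ (EuclideanSpace ℝ (Fin d)) ℝ) with hGxdef
    set Gα : ℝ →L[ℝ] ℝ := G.comp (ContinuousLinearMap.inr ℝ (EuclideanSpace ℝ (Fin d)) ℝ) with hGαdef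
    have hGxf : HasFDerivAt (fun x : EuclideanSpace ℝ (Fin d) => g (x, αstar)) Gx x₀ :=
      hGf.comp x₀ (hasFDerivAt_prodMk_left x₀ αstar)
    have hGαf : HasFDerivAt (fun α : ℝ => g (x₀, α)) Gα αstar :=
      hGf.comp αstar (hasFDerivAt_prodMk_right x₀ αstar)
    have hGxne : Gx ≠ 0 := by
      rw [← hGxf.fderiv]; exact hgrad
    -- the constraint is active at αstar
    have hg0 : g (x₀, αstar) = 0 := by
      rcases eq_or_lt_of_le hx₀feas with h0 | h0
      · exact h0.symm
      · exfalso; apply hF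
        have hcont : ContinuousAt (fun x : EuclideanSpace ℝ (Fin d) => g (x, αstar)) x₀ :=
          (hgd.continuous.comp (continuous_id.prodMk continuous_const)).continuousAt
        have hev : ∀ᶠ x in 𝓝 x₀, g (x, αstar) ∈ Set.Ioi 0 := hcont (Ioi_mem_nhds h0)
        have hloc : IsLocalMin f x₀ := by
          filter_upwards [hev] with x hx
          exact hx₀min x (le_of_lt hx)
        rw [hFdef]
        exact hloc.fderiv_eq_zero
    -- feasible directions
    have Hpos : ∀ w : EuclideanSpace ℝ (Fin d), 0 < Gx w → 0 ≤ F w := by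
      intro w hw
      have hl : HasDerivAt (fun s : ℝ => x₀ + s • w) w 0 := by
        simpa using ((hasDerivAt_id (0:ℝ)).smul_const w).const_add x₀
      have hGxf' : HasFDerivAt (fun x : EuclideanSpace ℝ (Fin d) => g (x, αstar)) Gx (x₀ + (0:ℝ) • w) := by
        simpa using hGxf
      have hθ : HasDerivAt (fun s : ℝ => g (x₀ + s • w, αstar)) (Gx w) 0 :=
        by have := hGxf'.comp_hasDerivAt 0 hl; exact this
      have hev := aux_eventually_pos hθ (by simpa using hg0) hw
      have hFf' : HasFDerivAt f F (x₀ + (0:ℝ) • w) := by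
        simpa using (hfd x₀).hasFDerivAt
      have hη : HasDerivAt (fun s : ℝ => f (x₀ + s • w)) (F w) 0 :=
        hFf'.comp_hasDerivAt 0 hl
      apply aux_slope_nonneg hη.hasDerivWithinAt
      filter_upwards [hev] with s hs
      simpa using hx₀min _ (le_of_lt hs)
    obtain ⟨z, hz⟩ : ∃ z : EuclideanSpace ℝ (Fin d), 0 < Gx z := by
      obtain ⟨z₀, hz₀⟩ : ∃ z : EuclideanSpace ℝ (Fin d), Gx z ≠ 0 := by
        by_contra hc; push_neg at hc
        exact hGxne (ContinuousLinearMap.ext fun z => by simp [hc z])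
      rcases lt_or_gt_of_ne hz₀ with h0 | h0
      · exact ⟨-z₀, by simpa using h0⟩
      · exact ⟨z₀, h0⟩
    have hFz : 0 ≤ F z := Hpos z hz
    set lam := F z / Gx z with hlamdef
    have hker : ∀ u : EuclideanSpace ℝ (Fin d), Gx u = 0 → F u = 0 := by
      have key : ∀ u : EuclideanSpace ℝ (Fin d), Gx u = 0 → 0 ≤ F u := by
        intro u hu
        by_contra hneg
        push_neg at hneg
        have hε : 0 < -F u / (F z + 1) := by
          apply div_pos (by linarith) (by linarith)
        have h1 : 0 < Gx (u + (-F u / (F z + 1)) • z) := by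
          rw [map_add, map_smul, hu, smul_eq_mul]
          positivity
        have h2 := Hpos _ h1
        rw [map_add, map_smul, smul_eq_mul] at h2
        have hd1 : (0:ℝ) < F z + 1 := by linarith
        have h3 : F u + -F u / (F z + 1) * F z = F u / (F z + 1) := by
          field_simp
          ring
        rw [h3] at h2
        rcases div_nonneg_iff.mp h2 with ⟨ha, _⟩ | ⟨_, hb⟩
        · linarith
        · linarith
      intro u hu
      have h2 := key u hu
      have h3 := key (-u) (by rw [map_neg, hu, neg_zero])
      rw [map_neg] at h3
      linarith
    have hprop : ∀ w : EuclideanSpace ℝ (Fin d), F w = lam * Gx w := by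
      intro w
      have hzne : Gx z ≠ 0 := ne_of_gt hz
      have hu : Gx (w - (Gx w / Gx z) • z) = 0 := by
        rw [map_sub, map_smul, smul_eq_mul]
        field_simp
        ring
      have := hker _ hu
      rw [map_sub, map_smul, smul_eq_mul, sub_eq_zero] at this
      rw [this, hlamdef]
      field_simp
    have hlam_pos : 0 < lam := by
      rcases (div_nonneg hFz hz.le).lt_or_eq with h0 | h0
      · exact h0
      · exfalso; apply hF
        apply ContinuousLinearMap.ext
        intro w
        rw [hprop w, hlamdef, ← h0, zero_mul]
        simp
    -- now the per-α argument
    intro ᾱ hᾱ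
    set e := ᾱ - αstar with hedef
    set c : ℝ → ℝ := fun t => αstar + t * e with hcdef
    have hc0 : c 0 = αstar := by simp [hcdef]
    have hcA : Set.MapsTo c (Set.Icc 0 1) A := by
      intro t ht
      have := hA.add_smul_sub_mem hαstarA hᾱ ht
      simpa [hcdef, hedef, smul_eq_mul] using this
    obtain ⟨L, hL⟩ := hdiff
    set v := L e with hvdef
    have hcd : HasDerivWithinAt c e (Set.Icc 0 1) 0 :=
      ((hasDerivAt_mul_const e).const_add αstar).hasDerivWithinAt
    have hL' : HasFDerivWithinAt xstar L A (c 0) := hc0 ▸ hL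
    have hX : HasDerivWithinAt (fun t => xstar (c t)) v (Set.Icc 0 1) 0 :=
      hL'.comp_hasDerivWithinAt 0 hcd hcA
    have hP : HasDerivWithinAt (fun t => (xstar (c t), c t)) (v, e) (Set.Icc 0 1) 0 :=
      hX.prodMk hcd
    have hGf' : HasFDerivAt g G (xstar (c 0), c 0) := by rw [hc0]; exact hGf
    have hψ : HasDerivWithinAt (fun t => g (xstar (c t), c t)) (G (v, e)) (Set.Icc 0 1) 0 :=
      hGf'.comp_hasDerivWithinAt 0 hP
    have hFf' : HasFDerivAt f F (xstar (c 0)) := by rw [hc0]; exact (hfd x₀).hasFDerivAt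
    have hφ : HasDerivWithinAt (fun t => f (xstar (c t))) (F v) (Set.Icc 0 1) 0 :=
      hFf'.comp_hasDerivWithinAt 0 hX
    -- c t ∈ U eventually
    have hU_ev : ∀ᶠ t in 𝓝[>] (0:ℝ), c t ∈ U := by
      have hcont : ContinuousAt c 0 := (continuous_const.add (continuous_id.mul continuous_const)).continuousAt
      have h1 : ∀ᶠ t in 𝓝 (0:ℝ), c t ∈ V := by
        apply hcont
        rw [hc0]
        exact hVopen.mem_nhds (by rw [hUV] at hαstarU; exact hαstarU.1)
      have h2 : ∀ᶠ t in 𝓝[>] (0:ℝ), c t ∈ V := nhdsWithin_le_nhds h1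
      filter_upwards [h2, Ioc_mem_nhdsGT one_pos] with t ht1 ht2
      rw [hUV]
      exact ⟨ht1, hcA ⟨ht2.1.le, ht2.2⟩⟩
    -- derivative of ψ nonneg
    have hψ0 : g (xstar (c 0), c 0) = 0 := by rw [hc0]; exact hg0
    have h1 : 0 ≤ G (v, e) := by
      apply aux_slope_nonneg hψ
      filter_upwards [hU_ev] with t ht
      rw [hψ0]
      exact (hxstar (c t) ht).1
    -- derivative of φ nonpos
    have h2 : F v ≤ 0 := by
      apply aux_slope_nonpos hφ
      filter_upwards [hU_ev] with t ht
      obtain ⟨xa, hb1, hb2, hb3⟩ := hattain (c t) (hUA ht)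
      have hc1 : f (xstar (c t)) ≤ f xa := (hxstar (c t) ht).2 xa hb1
      have hc2 : h (c t) ≤ h αstar := hmax (c t) (hUA ht)
      rw [hc0]
      rw [← hx₀def]
      linarith [hval]
    -- split G (v, e)
    have hsplit : G (v, e) = Gx v + Gα e := by
      have hve : ((v, e) : EuclideanSpace ℝ (Fin d) × ℝ) = ((v, 0) : EuclideanSpace ℝ (Fin d) × ℝ) + ((0 : EuclideanSpace ℝ (Fin d)), e) := by simp
      rw [hve, map_add]
      simp only [hGxdef, hGαdef, ContinuousLinearMap.comp_apply,
        ContinuousLinearMap.inl_apply, ContinuousLinearMap.inr_apply]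
    have hGxv : Gx v ≤ 0 := by
      by_contra hpos
      push_neg at hpos
      have hmul : 0 < lam * Gx v := mul_pos hlam_pos hpos
      have hfv := hprop v
      linarith
    have hGαe : 0 ≤ Gα e := by
      rw [hsplit] at h1; linarith
    -- convexity in α
    have htan := aux_tangent (hgconv x₀) hαstarA hᾱ hGαf
    rw [← hedef] at htan
    rw [hg0] at htan
    linarith
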